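/- Let (T, f) be a depth-decomposition of a vector matroid M = (X, I) such that T is not a rooted path and each primary branch of T is at capacity. Let S_1, ..., S_k be the primary branches of T, let A_1, ..., A_k be the linear hulls of Ŝ_1, ..., Ŝ_k respectively, and let h be the depth of the common root of S_1, ..., S_k in T. Then for all distinct indices i and j, dim(A_i ∩ A_j) = h and A_i ∩ A_j = A_i ∩ span(∪_{j' ≠ i} A_{j'}). -/
import Mathlib


/-! Infrastructure: rooted trees, depth-decompositions and branch-depth of matroids,
following the definitions of Kardoš, Král', Liebenau, Mach and of the paper
"Optimal matrix tree-depth and a row-invariant parameterized algorithm for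
integer programming". -/

/-- A rooted tree on a (nonempty) finite vertex type `V`, given by its root and its
parent function: the parent of the root is the root itself, and from any vertex the
root is reached by iterating the parent function. -/
structure RTree (V : Type) [Fintype V] [DecidableEq V] where
  root : V
  parent : V → V
  parent_root : parent root = root
  reach : ∀ v : V, ∃ n : ℕ, parent^[n] v = root

namespace RTree

variable {V : Type} [Fintype V] [DecidableEq V]

/-- A vertex is a leaf if it has no children. -/
def IsLeaf (T : RTree V) (v : V) : Prop :=
  ∀ u : V, T.parent u = v → u = v

/-- The non-root vertices on the path from `v` to the root of `T`; they are in bijective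
correspondence with the edges of this path (each such vertex corresponds to the edge
joining it to its parent). -/
def pathEdges (T : RTree V) (v : V) : Set V :=
  {u | u ≠ T.root ∧ ∃ n : ℕ, T.parent^[n] v = u}

/-- The number of edges of the tree. -/
def edgeCount (T : RTree V) : ℕ := Fintype.card V - 1

/-- The depth of a vertex: the number of edges on the path from the root to it. -/
noncomputable def depthV (T : RTree V) (v : V) : ℕ :=
  sInf {n : ℕ | T.parent^[n] v = T.root}

/-- The depth of the tree: the maximum number of edges on a path from the root to a leaf. -/
noncomputable def depth (T : RTree V) : ℕ :=
  Finset.univ.sup T.depthV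

/-- The descendants of a vertex `u` (including `u` itself). -/
def desc (T : RTree V) (u : V) : Set V := {w | ∃ n : ℕ, T.parent^[n] w = u}

/-- The number of children of a vertex. -/
noncomputable def childCount (T : RTree V) (u : V) : ℕ :=
  {w : V | T.parent w = u ∧ w ≠ u}.ncard

/-- A rooted tree is a rooted path if every vertex has at most one child. -/
def IsRootedPath (T : RTree V) : Prop := ∀ u : V, T.childCount u ≤ 1

/-- `a` is a strict ancestor of `v`. -/
def IsStrictAncestor (T : RTree V) (a v : V) : Prop :=
  a ≠ v ∧ ∃ n : ℕ, T.parent^[n] v = a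

/-- A branch of `T` consists of a vertex `u`, exactly one child `u'` of `u` and all
descendants of `u'`; it is hence determined by the non-root vertex `u'` and denoted
here by `u'`.  Its root is `parent u'`, its vertex set is `{parent u'} ∪ desc u'`, and
its edge number `‖S‖` is `(desc u').ncard`.  The branch determined by `u'` is primary
if its root has at least two children and every (strict) ancestor of its root has
exactly one child. -/
def IsPrimaryBranch (T : RTree V) (u' : V) : Prop :=
  u' ≠ T.root ∧ 2 ≤ T.childCount (T.parent u') ∧
    ∀ a : V, T.IsStrictAncestor a (T.parent u') → T.childCount a = 1

end RTree

/-- `(T, f)` is a depth-decomposition of the matroid on ground set `X` with rank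
function `rk` and rank `r`: `f` maps elements of the matroid to leaves of `T`, the
number of edges of `T` equals the rank `r` of the matroid, and the rank of every
`X' ⊆ X` is at most the number of edges contained in the union of the paths in `T`
from the root to the vertices `f x`, `x ∈ X'`. -/
def IsDepthDecompOn {X V : Type} [Fintype V] [DecidableEq V]
    (rk : Set X → ℕ) (r : ℕ) (T : RTree V) (f : X → V) : Prop :=
  (∀ x : X, T.IsLeaf (f x)) ∧ T.edgeCount = r ∧
    ∀ X' : Set X, rk X' ≤ (⋃ x ∈ X', T.pathEdges (f x)).ncard

/-- The branch-depth of the matroid on ground set `X` with rank function `rk` and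
rank `r`: the smallest depth of a rooted tree forming a depth-decomposition. -/
noncomputable def branchDepth {X : Type} (rk : Set X → ℕ) (r : ℕ) : ℕ :=
  sInf {d : ℕ | ∃ (nV : ℕ) (T : RTree (Fin (nV + 1))) (f : X → Fin (nV + 1)),
    IsDepthDecompOn rk r T f ∧ T.depth = d}

/-- The branch of `T` determined by the non-root vertex `u'` is at capacity: the rank
of the set `Ŝ` of matroid elements mapped by `f` to the leaves of the branch equals the
number `‖S‖` of edges of the branch plus the number of edges on the path from the root
of `T` to the root of the branch. -/
def AtCapacity {X V : Type} [Fintype V] [DecidableEq V]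
    (rk : Set X → ℕ) (T : RTree V) (f : X → V) (u' : V) : Prop :=
  rk {x | f x ∈ T.desc u'} = (T.desc u').ncard + T.depthV (T.parent u')

/-- The rank function of the vector matroid formed by the family of vectors `v`:
the rank of a subset is the dimension of its linear hull. -/
noncomputable def vecRk (F : Type) {W ι : Type} [Field F] [AddCommGroup W] [Module F W]
    (v : ι → W) (S : Set ι) : ℕ :=
  Module.finrank F (Submodule.span F (v '' S))

/-- `(T, f, g)` is an extended depth-decomposition of the vector matroid formed by the
family of vectors `v`: `(T, f)` is a depth-decomposition, the images under `g` of the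
non-root vertices of `T` form a basis of the linear hull of the vectors, and every
vector `v x` lies in the linear hull of the `g`-image of the non-root vertices on the
path from `f x` to the root. -/
def IsExtDepthDecomp (F : Type) {W ι V : Type} [Field F] [AddCommGroup W] [Module F W]
    [Fintype V] [DecidableEq V] (v : ι → W) (T : RTree V) (f : ι → V) (g : V → W) : Prop :=
  IsDepthDecompOn (vecRk F v) (vecRk F v Set.univ) T f ∧
  LinearIndependent F (fun u : {u : V // u ≠ T.root} => g u.val) ∧
  Submodule.span F (g '' {u : V | u ≠ T.root}) = Submodule.span F (Set.range v) ∧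
  ∀ x : ι, v x ∈ Submodule.span F (g '' T.pathEdges (f x))

/-! ### Auxiliary lemmas about rooted trees -/

namespace RTree

variable {V : Type} [Fintype V] [DecidableEq V] (T : RTree V)

lemma iterate_depthV (v : V) : T.parent^[T.depthV v] v = T.root :=
  Nat.sInf_mem (T.reach v)

lemma depthV_le' {v : V} {n : ℕ} (h : T.parent^[n] v = T.root) : T.depthV v ≤ n :=
  Nat.sInf_le h

lemma iterate_of_le {v : V} {n : ℕ} (h : T.depthV v ≤ n) : T.parent^[n] v = T.root := by
  obtain ⟨k, hk⟩ := Nat.exists_eq_add_of_le h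
  subst hk
  rw [add_comm (T.depthV v) k, Function.iterate_add_apply, T.iterate_depthV]
  exact Function.iterate_fixed T.parent_root k

lemma depthV_iterate (v : V) (n : ℕ) :
    T.depthV (T.parent^[n] v) = T.depthV v - n := by
  refine le_antisymm (T.depthV_le' ?_) ?_
  · rw [← Function.iterate_add_apply]
    exact T.iterate_of_le (by omega)
  · have h1 := T.iterate_depthV (T.parent^[n] v)
    rw [← Function.iterate_add_apply] at h1
    have := T.depthV_le' h1
    omega

lemma depthV_eq_zero_iff {v : V} : T.depthV v = 0 ↔ v = T.root := by
  constructor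
  · intro h
    have := T.iterate_depthV v
    rwa [h, Function.iterate_zero_apply] at this
  · rintro rfl
    have h0 : T.parent^[0] T.root = T.root := rfl
    have := T.depthV_le' h0
    omega

lemma depthV_desc {w u : V} (hu : u ≠ T.root) {n : ℕ} (h : T.parent^[n] w = u) :
    T.depthV w = T.depthV u + n := by
  have h1 := T.depthV_iterate w n
  rw [h] at h1
  have h2 : n ≤ T.depthV w := by
    by_contra hc
    exact hu (h.symm.trans (T.iterate_of_le (by omega)))
  omega

lemma mem_pathEdges_iff {v u : V} :
    u ∈ T.pathEdges v ↔ ∃ n, n < T.depthV v ∧ T.parent^[n] v = u := by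
  constructor
  · rintro ⟨hu, n, rfl⟩
    refine ⟨n, ?_, rfl⟩
    by_contra hc
    exact hu (T.iterate_of_le (by omega))
  · rintro ⟨n, hn, rfl⟩
    refine ⟨fun hr => ?_, n, rfl⟩
    have := T.depthV_le' hr
    omega

lemma ncard_pathEdges (v : V) : (T.pathEdges v).ncard = T.depthV v := by
  have himg : T.pathEdges v = (fun n => T.parent^[n] v) '' Set.Iio (T.depthV v) := by
    ext u
    simp only [mem_pathEdges_iff, Set.mem_image, Set.mem_Iio]
  have hinj : Set.InjOn (fun n => T.parent^[n] v) (Set.Iio (T.depthV v)) := by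
    intro a ha b hb hab
    have h1 := T.depthV_iterate v a
    have h2 := T.depthV_iterate v b
    simp only at hab
    rw [hab] at h1
    simp only [Set.mem_Iio] at ha hb
    omega
  rw [himg, Set.ncard_image_of_injOn hinj]
  have : (Set.Iio (T.depthV v) : Set ℕ) = ↑(Finset.range (T.depthV v)) := by
    ext n; simp
  rw [this, Set.ncard_coe_finset, Finset.card_range]

lemma depthV_parent {v : V} (hv : v ≠ T.root) :
    T.depthV v = T.depthV (T.parent v) + 1 := by
  have h1 := T.depthV_iterate v 1
  rw [Function.iterate_one] at h1
  have h2 : T.depthV v ≠ 0 := fun h => hv (T.depthV_eq_zero_iff.mp h)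
  omega

lemma spine_unique {b : V}
    (H : ∀ a, T.IsStrictAncestor a b → T.childCount a = 1) :
    ∀ v : V, T.depthV v ≤ T.depthV b →
      v = T.parent^[T.depthV b - T.depthV v] b := by
  suffices h : ∀ d v, T.depthV v = d → d ≤ T.depthV b →
      v = T.parent^[T.depthV b - d] b by
    intro v hv; exact h _ v rfl hv
  intro d
  induction d with
  | zero =>
    intro v hv _
    rw [T.depthV_eq_zero_iff.mp hv, Nat.sub_zero, T.iterate_depthV]
  | succ d ih =>
    intro v hv hle
    have hvroot : v ≠ T.root := by
      intro hr
      have := T.depthV_eq_zero_iff.mpr hr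
      omega
    have hp : T.depthV (T.parent v) = d := by
      have := T.depthV_parent hvroot; omega
    have ha := ih (T.parent v) hp (by omega)
    set k := T.depthV b - d with hk
    have hk1 : 1 ≤ k := by omega
    have hadepth : T.depthV (T.parent^[k] b) = d := by
      rw [T.depthV_iterate]; omega
    have hstrict : T.IsStrictAncestor (T.parent^[k] b) b := by
      refine ⟨fun hEq => ?_, k, rfl⟩
      rw [hEq] at hadepth
      omega
    have hcc := H _ hstrict
    unfold RTree.childCount at hcc
    obtain ⟨w, hw⟩ := Set.ncard_eq_one.mp hcc
    have hv_mem : v ∈ {w | T.parent w = T.parent^[k] b ∧ w ≠ T.parent^[k] b} := by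
      refine ⟨ha, fun hEq => ?_⟩
      rw [hEq] at hv
      omega
    have hs_mem : T.parent^[k-1] b ∈
        {w | T.parent w = T.parent^[k] b ∧ w ≠ T.parent^[k] b} := by
      refine ⟨?_, ?_⟩
      · calc T.parent (T.parent^[k-1] b)
            = T.parent^[k-1+1] b := (Function.iterate_succ_apply' T.parent (k-1) b).symm
          _ = T.parent^[k] b := by rw [Nat.sub_add_cancel hk1]
      · intro hEq
        have h1 := T.depthV_iterate b (k-1)
        rw [hEq] at h1
        omega
    rw [hw] at hv_mem hs_mem
    rw [Set.mem_singleton_iff] at hv_mem hs_mem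
    have hkk : k - 1 = T.depthV b - (d + 1) := by omega
    rw [hv_mem, ← hs_mem, hkk]

lemma primary_parent_eq {u₁ u₂ : V} (h₁ : T.IsPrimaryBranch u₁)
    (h₂ : T.IsPrimaryBranch u₂)
    (hd : T.depthV (T.parent u₁) = T.depthV (T.parent u₂)) :
    T.parent u₁ = T.parent u₂ := by
  have := T.spine_unique h₂.2.2 (T.parent u₁) (le_of_eq hd)
  rwa [hd, Nat.sub_self, Function.iterate_zero_apply] at this

lemma not_leaf_of_childCount {u : V} (h : 1 ≤ T.childCount u) : ¬ T.IsLeaf u := by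
  intro hl
  unfold RTree.childCount at h
  obtain ⟨w, hw⟩ := Set.nonempty_of_ncard_ne_zero
    (s := {w | T.parent w = u ∧ w ≠ u}) (by omega)
  exact hw.2 (hl w hw.1)

lemma leaf_mem_primary_desc {u₁ l : V} (h₁ : T.IsPrimaryBranch u₁) (hl : T.IsLeaf l) :
    ∃ c, T.IsPrimaryBranch c ∧ T.parent c = T.parent u₁ ∧ l ∈ T.desc c := by
  set b := T.parent u₁ with hbdef
  have hdepth : T.depthV b < T.depthV l := by
    by_contra hc
    push_neg at hc
    have hspine := T.spine_unique h₁.2.2 l hc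
    have hcc : 1 ≤ T.childCount l := by
      rcases Nat.eq_zero_or_pos (T.depthV b - T.depthV l) with h0 | hpos
      · rw [h0, Function.iterate_zero_apply] at hspine
        rw [hspine]
        have := h₁.2.1
        omega
      · have hstrict : T.IsStrictAncestor l b :=
          ⟨fun hEq => by rw [hEq] at hpos; omega, T.depthV b - T.depthV l, hspine.symm⟩
        rw [h₁.2.2 l hstrict]
    exact T.not_leaf_of_childCount hcc hl
  set m := T.depthV l - T.depthV b - 1 with hm
  have hb_eq : T.parent^[m+1] l = b := by
    have hdm : T.depthV (T.parent^[m+1] l) = T.depthV b := by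
      rw [T.depthV_iterate]; omega
    have := T.spine_unique h₁.2.2 (T.parent^[m+1] l) (le_of_eq hdm)
    rwa [hdm, Nat.sub_self, Function.iterate_zero_apply] at this
  have hpc : T.parent (T.parent^[m] l) = b :=
    (Function.iterate_succ_apply' T.parent m l).symm.trans hb_eq
  have hcdep : T.depthV (T.parent^[m] l) = T.depthV b + 1 := by
    rw [T.depthV_iterate]; omega
  refine ⟨T.parent^[m] l, ⟨?_, ?_, ?_⟩, hpc, m, rfl⟩
  · intro hr
    have := T.depthV_eq_zero_iff.mpr hr
    omega
  · rw [hpc]; exact h₁.2.1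
  · intro a haa
    rw [hpc] at haa
    exact h₁.2.2 a haa

lemma desc_disjoint {c₁ c₂ : V} (h1 : c₁ ≠ T.root) (h2 : c₂ ≠ T.root)
    (hd : T.depthV c₁ = T.depthV c₂) (hne : c₁ ≠ c₂) :
    Disjoint (T.desc c₁) (T.desc c₂) := by
  rw [Set.disjoint_left]
  rintro w ⟨n, hn⟩ ⟨m, hm⟩
  have e1 := T.depthV_desc h1 hn
  have e2 := T.depthV_desc h2 hm
  have hnm : n = m := by omega
  exact hne (by rw [← hn, ← hm, hnm])

lemma pathEdges_subset_of_desc {w u' : V} (hw : w ∈ T.desc u') :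
    T.pathEdges w ⊆ T.desc u' ∪ T.pathEdges (T.parent u') := by
  obtain ⟨m, hm⟩ := hw
  rintro z ⟨hz, n, rfl⟩
  rcases le_or_gt n m with hle | hlt
  · left
    refine ⟨m - n, ?_⟩
    rw [← Function.iterate_add_apply, show m - n + n = m by omega]
    exact hm
  · right
    refine ⟨hz, n - m - 1, ?_⟩
    calc T.parent^[n-m-1] (T.parent u')
        = T.parent^[n-m-1+1] u' := (Function.iterate_succ_apply T.parent (n-m-1) u').symm
      _ = T.parent^[n-m] u' := by rw [show n - m - 1 + 1 = n - m by omega]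
      _ = T.parent^[n-m] (T.parent^[m] w) := by rw [hm]
      _ = T.parent^[n-m+m] w := (Function.iterate_add_apply T.parent (n-m) m w).symm
      _ = T.parent^[n] w := by rw [show n - m + m = n by omega]

lemma depthV_le_of_mem_pathEdges {b z : V} (hz : z ∈ T.pathEdges b) :
    T.depthV z ≤ T.depthV b := by
  obtain ⟨n, hn, rfl⟩ := T.mem_pathEdges_iff.mp hz
  rw [T.depthV_iterate]; omega

lemma depthV_ge_of_mem_desc {u' w : V} (hu : u' ≠ T.root) (hw : w ∈ T.desc u') :
    T.depthV u' ≤ T.depthV w := by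
  obtain ⟨n, hn⟩ := hw
  have := T.depthV_desc hu hn; omega

lemma root_notMem_desc {u' : V} (hu : u' ≠ T.root) : T.root ∉ T.desc u' := by
  rintro ⟨n, hn⟩
  exact hu ((Function.iterate_fixed T.parent_root n).symm.trans hn).symm

end RTree

/-- the two key equalities in the proof of the intersection lemma.
Let `(T, f)` be a depth-decomposition of a vector matroid such that `T` is not a rooted
path and each primary branch of `T` is at capacity, and let `h` be the depth of the
common root of the primary branches.  Then for all distinct primary branches `u₁ ≠ u₂`,
the intersection of the linear hulls `A₁ = span Ŝ₁` and `A₂ = span Ŝ₂` has dimension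
`h`, and `A₁ ⊓ A₂ = A₁ ⊓ span (⋃ of the hulls of the other primary branches)`. -/
theorem inter_dim_eq_and_inter_eq (F W ι : Type) [Field F] [AddCommGroup W]
    [Module F W] [Fintype ι] (v : ι → W) {V : Type} [Fintype V] [DecidableEq V]
    (T : RTree V) (f : ι → V)
    (hdd : IsDepthDecompOn (vecRk F v) (vecRk F v Set.univ) T f)
    (hnp : ¬ T.IsRootedPath)
    (hcap : ∀ u' : V, T.IsPrimaryBranch u' → AtCapacity (vecRk F v) T f u')
    (h : ℕ) (hh : ∀ u' : V, T.IsPrimaryBranch u' → T.depthV (T.parent u') = h) :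
    ∀ u₁ u₂ : V, T.IsPrimaryBranch u₁ → T.IsPrimaryBranch u₂ → u₁ ≠ u₂ →
      Module.finrank F
        ↥(Submodule.span F (v '' {x | f x ∈ T.desc u₁}) ⊓
            Submodule.span F (v '' {x | f x ∈ T.desc u₂})) = h ∧
      Submodule.span F (v '' {x | f x ∈ T.desc u₁}) ⊓
          Submodule.span F (v '' {x | f x ∈ T.desc u₂}) =
        Submodule.span F (v '' {x | f x ∈ T.desc u₁}) ⊓
          (⨆ u' ∈ {u' : V | T.IsPrimaryBranch u' ∧ u' ≠ u₁},
            Submodule.span F (v '' {x | f x ∈ T.desc u'})) := by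
  classical
  intro u₁ u₂ hp₁ hp₂ hne
  obtain ⟨hleaf, hedge, hrk⟩ := hdd
  set b := T.parent u₁ with hbdef
  have hhb : T.depthV b = h := hh u₁ hp₁
  have hpar : ∀ c, T.IsPrimaryBranch c → T.parent c = b := fun c hc =>
    T.primary_parent_eq hc hp₁ (by rw [hh c hc, hh u₁ hp₁])
  have hcdepth : ∀ c, T.IsPrimaryBranch c → T.depthV c = h + 1 := by
    intro c hc
    rw [T.depthV_parent hc.1, hh c hc]
  set P : Finset V := Finset.univ.filter T.IsPrimaryBranch with hPdef
  have hmemP : ∀ c, c ∈ P ↔ T.IsPrimaryBranch c := by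
    intro c; simp [hPdef]
  set Q : Finset V := P.erase u₁ with hQdef
  have hu₁P : u₁ ∈ P := (hmemP u₁).mpr hp₁
  -- generic rank bound
  have hspan_le : ∀ (X' : Set ι) (U : Set V),
      (∀ x ∈ X', T.pathEdges (f x) ⊆ U) →
      Module.finrank F ↥(Submodule.span F (v '' X')) ≤ U.ncard := by
    intro X' U hU
    calc Module.finrank F ↥(Submodule.span F (v '' X')) = vecRk F v X' := rfl
      _ ≤ (⋃ x ∈ X', T.pathEdges (f x)).ncard := hrk X'
      _ ≤ U.ncard := Set.ncard_le_ncard (Set.iUnion₂_subset hU) (Set.toFinite U)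
  have finA : ∀ (S : Set ι), FiniteDimensional F ↥(Submodule.span F (v '' S)) :=
    fun S => FiniteDimensional.span_of_finite F (Set.toFinite _)
  have hdim : ∀ c, T.IsPrimaryBranch c →
      Module.finrank F ↥(Submodule.span F (v '' {x | f x ∈ T.desc c}))
        = (T.desc c).ncard + h := by
    intro c hc
    have hcc := hcap c hc
    unfold AtCapacity at hcc
    rw [hh c hc] at hcc
    exact hcc
  -- the pair bound
  have hpair : Module.finrank F ↥(Submodule.span F (v '' {x | f x ∈ T.desc u₁}) ⊔
      Submodule.span F (v '' {x | f x ∈ T.desc u₂}))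
      ≤ (T.desc u₁).ncard + (T.desc u₂).ncard + h := by
    rw [← Submodule.span_union, ← Set.image_union]
    refine le_trans (hspan_le _ (T.desc u₁ ∪ T.desc u₂ ∪ T.pathEdges b) ?_) ?_
    · rintro x (hx | hx) <;> intro z hz
      · rcases T.pathEdges_subset_of_desc hx hz with h' | h'
        · exact Or.inl (Or.inl h')
        · exact Or.inr h'
      · rcases T.pathEdges_subset_of_desc hx hz with h' | h'
        · exact Or.inl (Or.inr h')
        · rw [hpar u₂ hp₂] at h'
          exact Or.inr h'
    · calc (T.desc u₁ ∪ T.desc u₂ ∪ T.pathEdges b).ncard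
          ≤ (T.desc u₁ ∪ T.desc u₂).ncard + (T.pathEdges b).ncard :=
            Set.ncard_union_le _ _
        _ ≤ (T.desc u₁).ncard + (T.desc u₂).ncard + (T.pathEdges b).ncard := by
            have := Set.ncard_union_le (T.desc u₁) (T.desc u₂); omega
        _ = (T.desc u₁).ncard + (T.desc u₂).ncard + h := by
            rw [T.ncard_pathEdges, hhb]
  -- the big supremum B
  set B : Submodule F W := ⨆ u' ∈ {u' : V | T.IsPrimaryBranch u' ∧ u' ≠ u₁},
      Submodule.span F (v '' {x | f x ∈ T.desc u'}) with hBdef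
  have hBspan : B = Submodule.span F
      (v '' ⋃ c ∈ {u' : V | T.IsPrimaryBranch u' ∧ u' ≠ u₁}, {x | f x ∈ T.desc c}) := by
    rw [hBdef, Set.image_iUnion₂, Submodule.span_iUnion₂]
  have hmemQ : ∀ c, c ∈ Q ↔ (T.IsPrimaryBranch c ∧ c ≠ u₁) := by
    intro c
    rw [hQdef, Finset.mem_erase, hmemP]
    tauto
  have hdimB : Module.finrank F ↥B ≤ (∑ c ∈ Q, (T.desc c).ncard) + h := by
    rw [hBspan]
    refine le_trans (hspan_le _ (T.pathEdges b ∪ ⋃ c ∈ Q, T.desc c) ?_) ?_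
    · intro x hx
      simp only [Set.mem_iUnion, Set.mem_setOf_eq] at hx
      obtain ⟨c, hcQ, hxc⟩ := hx
      intro z hz
      rcases T.pathEdges_subset_of_desc hxc hz with h' | h'
      · exact Or.inr (Set.mem_biUnion ((hmemQ c).mpr hcQ) h')
      · rw [hpar c hcQ.1] at h'
        exact Or.inl h'
    · have hU : (⋃ c ∈ Q, T.desc c) = ↑(Q.biUnion fun c => (T.desc c).toFinset) := by
        ext z
        simp [Set.mem_toFinset]
      calc (T.pathEdges b ∪ ⋃ c ∈ Q, T.desc c).ncard
          ≤ (T.pathEdges b).ncard + (⋃ c ∈ Q, T.desc c).ncard :=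
            Set.ncard_union_le _ _
        _ ≤ h + ∑ c ∈ Q, (T.desc c).ncard := by
            rw [T.ncard_pathEdges, hhb, hU, Set.ncard_coe_finset]
            have h1 := Finset.card_biUnion_le (s := Q) (t := fun c => (T.desc c).toFinset)
            have h2 : ∑ c ∈ Q, ((T.desc c).toFinset).card = ∑ c ∈ Q, (T.desc c).ncard :=
              Finset.sum_congr rfl fun c _ => (Set.ncard_eq_toFinset_card' _).symm
            omega
        _ = (∑ c ∈ Q, (T.desc c).ncard) + h := by rw [Nat.add_comm]
  -- total cardinality bound
  have hcardV : h + ∑ c ∈ P, (T.desc c).ncard ≤ Fintype.card V - 1 := by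
    have hsub : (T.pathEdges b).toFinset ∪ (P.biUnion fun c => (T.desc c).toFinset)
        ⊆ Finset.univ.erase T.root := by
      intro z hz
      rw [Finset.mem_union] at hz
      rw [Finset.mem_erase]
      refine ⟨?_, Finset.mem_univ z⟩
      rcases hz with hz | hz
      · rw [Set.mem_toFinset] at hz; exact hz.1
      · rw [Finset.mem_biUnion] at hz
        obtain ⟨c, hcP, hzc⟩ := hz
        rw [Set.mem_toFinset] at hzc
        have hcprim := (hmemP c).mp hcP
        intro hzr
        exact T.root_notMem_desc hcprim.1 (hzr ▸ hzc)
    have hdisj : Disjoint (T.pathEdges b).toFinset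
        (P.biUnion fun c => (T.desc c).toFinset) := by
      rw [Finset.disjoint_left]
      intro z hz1 hz2
      rw [Set.mem_toFinset] at hz1
      rw [Finset.mem_biUnion] at hz2
      obtain ⟨c, hcP, hzc⟩ := hz2
      rw [Set.mem_toFinset] at hzc
      have hcprim := (hmemP c).mp hcP
      have d1 := T.depthV_le_of_mem_pathEdges hz1
      have d2 := T.depthV_ge_of_mem_desc hcprim.1 hzc
      rw [hcdepth c hcprim] at d2
      rw [hhb] at d1
      omega
    have hpdisj : ∀ c₁ ∈ P, ∀ c₂ ∈ P, c₁ ≠ c₂ →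
        Disjoint ((T.desc c₁).toFinset) ((T.desc c₂).toFinset) := by
      intro c₁ hc₁ c₂ hc₂ hne'
      have p1 := (hmemP c₁).mp hc₁
      have p2 := (hmemP c₂).mp hc₂
      have hdj := T.desc_disjoint p1.1 p2.1
        (by rw [hcdepth c₁ p1, hcdepth c₂ p2]) hne'
      rw [Finset.disjoint_left]
      intro a ha hb'
      rw [Set.mem_toFinset] at ha hb'
      exact (Set.disjoint_left.mp hdj) ha hb'
    have hcard := Finset.card_le_card hsub
    rw [Finset.card_union_of_disjoint hdisj, Finset.card_biUnion hpdisj,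
      Finset.card_erase_of_mem (Finset.mem_univ _), Finset.card_univ] at hcard
    have h1 : (T.pathEdges b).toFinset.card = h := by
      rw [← Set.ncard_eq_toFinset_card', T.ncard_pathEdges, hhb]
    have h2 : ∑ c ∈ P, ((T.desc c).toFinset).card = ∑ c ∈ P, (T.desc c).ncard :=
      Finset.sum_congr rfl fun c _ => (Set.ncard_eq_toFinset_card' _).symm
    rw [h1, h2] at hcard
    exact hcard
  -- coverage of the ground set by primary branches
  have hcover : (Set.univ : Set ι) = {x : ι | f x ∈ T.desc u₁} ∪
      ⋃ c ∈ {u' : V | T.IsPrimaryBranch u' ∧ u' ≠ u₁}, {x : ι | f x ∈ T.desc c} := by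
    refine Set.eq_of_subset_of_subset ?_ (Set.subset_univ _)
    intro x _
    obtain ⟨c, hcp, hcb, hxc⟩ := T.leaf_mem_primary_desc hp₁ (hleaf x)
    by_cases hcu : c = u₁
    · left; rw [← hcu]; exact hxc
    · right
      have hcQ : c ∈ {u' : V | T.IsPrimaryBranch u' ∧ u' ≠ u₁} := ⟨hcp, hcu⟩
      exact Set.mem_biUnion hcQ hxc
  have hsup : Submodule.span F (v '' {x | f x ∈ T.desc u₁}) ⊔ B =
      Submodule.span F (v '' (Set.univ : Set ι)) := by
    rw [hBspan, ← Submodule.span_union, ← Set.image_union, ← hcover]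
  have hdimsup : Module.finrank F
      ↥(Submodule.span F (v '' {x | f x ∈ T.desc u₁}) ⊔ B) = Fintype.card V - 1 := by
    rw [hsup]
    have h1 : Module.finrank F ↥(Submodule.span F (v '' (Set.univ : Set ι)))
        = vecRk F v Set.univ := rfl
    rw [h1, ← hedge]
    rfl
  have hsplit : ∑ c ∈ P, (T.desc c).ncard =
      (T.desc u₁).ncard + ∑ c ∈ Q, (T.desc c).ncard :=
    (Finset.add_sum_erase P _ hu₁P).symm
  -- dimension counting
  haveI i1 := finA {x : ι | f x ∈ T.desc u₁}
  haveI i2 := finA {x : ι | f x ∈ T.desc u₂}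
  haveI iB : FiniteDimensional F ↥B := by rw [hBspan]; exact finA _
  have e12 := Submodule.finrank_sup_add_finrank_inf_eq
    (Submodule.span F (v '' {x | f x ∈ T.desc u₁}))
    (Submodule.span F (v '' {x | f x ∈ T.desc u₂}))
  have e1B := Submodule.finrank_sup_add_finrank_inf_eq
    (Submodule.span F (v '' {x | f x ∈ T.desc u₁})) B
  rw [hdim u₁ hp₁, hdim u₂ hp₂] at e12
  rw [hdim u₁ hp₁, hdimsup] at e1B
  have hAB : Submodule.span F (v '' {x | f x ∈ T.desc u₂}) ≤ B := by
    rw [hBdef]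
    have hu₂ : u₂ ∈ {u' : V | T.IsPrimaryBranch u' ∧ u' ≠ u₁} := ⟨hp₂, hne.symm⟩
    exact le_iSup₂_of_le u₂ hu₂ le_rfl
  have hmono : Submodule.span F (v '' {x | f x ∈ T.desc u₁}) ⊓
      Submodule.span F (v '' {x | f x ∈ T.desc u₂}) ≤
      Submodule.span F (v '' {x | f x ∈ T.desc u₁}) ⊓ B := inf_le_inf_left _ hAB
  haveI iInfB : FiniteDimensional F
      ↥(Submodule.span F (v '' {x | f x ∈ T.desc u₁}) ⊓ B) :=
    Submodule.finiteDimensional_of_le inf_le_left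
  have hinf_le : Module.finrank F ↥(Submodule.span F (v '' {x | f x ∈ T.desc u₁}) ⊓
      Submodule.span F (v '' {x | f x ∈ T.desc u₂})) ≤
      Module.finrank F ↥(Submodule.span F (v '' {x | f x ∈ T.desc u₁}) ⊓ B) :=
    Submodule.finrank_mono hmono
  have hval : Module.finrank F ↥(Submodule.span F (v '' {x | f x ∈ T.desc u₁}) ⊓
      Submodule.span F (v '' {x | f x ∈ T.desc u₂})) = h := by omega
  refine ⟨hval, ?_⟩
  refine Submodule.eq_of_le_of_finrank_le hmono ?_
  omega
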